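/- Let H be a complex Hilbert space, U : H → H a unitary continuous linear operator, P : H → H an orthogonal projection (P = P*, P∘P = P), and ε ∈ {1, −1}. If k ∈ H satisfies k = ε · P(U k), then U k = ε · k; in particular P k = k and (I − P)(U k) = 0. (For ε = −1 this is the uniqueness statement for the Marchenko-type tail equation K + π*RK = 0 for the pressure field; for ε = +1 it is the analogous uniqueness statement for the velocity field.) -/

import Mathlib

open ContinuousLinearMap

/-- Let `U` be unitary on a complex Hilbert space `H`, `P` an
orthogonal projection, and `ε ∈ {1, −1}`. If `k = ε • P (U k)` then `U k = ε • k`;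
in particular `P k = k` and `(I − P)(U k) = 0`. -/
theorem stmt17 {H : Type*} [NormedAddCommGroup H] [InnerProductSpace ℂ H] [CompleteSpace H]
    (U : H →L[ℂ] H)
    (hU1 : ContinuousLinearMap.adjoint U ∘L U = 1)
    (hU2 : U ∘L ContinuousLinearMap.adjoint U = 1)
    (P : H →L[ℂ] H) (hP : IsSelfAdjoint P) (hP2 : P ∘L P = P)
    (ε : ℂ) (hε : ε = 1 ∨ ε = -1)
    (k : H) (hk : k = ε • P (U k)) :
    U k = ε • k ∧ P k = k ∧ ((1 : H →L[ℂ] H) - P) (U k) = 0 := by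
  have hε2 : ε * ε = 1 := by rcases hε with h | h <;> simp [h]
  have hεn : ‖ε‖ = 1 := by rcases hε with h | h <;> simp [h]
  have hPP : ∀ x : H, P (P x) = P x := fun x => congrFun (congrArg DFunLike.coe hP2) x
  -- U preserves norms
  have hUnorm : ∀ x : H, ‖U x‖ = ‖x‖ := by
    intro x
    have h1 : ContinuousLinearMap.adjoint U (U x) = x :=
      congrFun (congrArg DFunLike.coe hU1) x
    have h2 : (inner ℂ (U x) (U x) : ℂ) = inner ℂ x x := by
      rw [← ContinuousLinearMap.adjoint_inner_left U x (U x), h1]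
    rw [inner_self_eq_norm_sq_to_K, inner_self_eq_norm_sq_to_K] at h2
    have h3 : ‖U x‖ ^ 2 = ‖x‖ ^ 2 := by exact_mod_cast h2
    nlinarith [norm_nonneg (U x), norm_nonneg x]
  set x := U k with hx
  -- Pythagoras: ‖x‖² = ‖P x‖² + ‖x − P x‖²
  have horth : (inner ℂ (P x) (x - P x) : ℂ) = 0 := by
    have := hP.adjoint_eq
    calc (inner ℂ (P x) (x - P x) : ℂ) = inner ℂ x (P (x - P x)) := by
          rw [← ContinuousLinearMap.adjoint_inner_left P, this]
      _ = 0 := by rw [map_sub, hPP]; simp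
  have hpyth : ‖P x + (x - P x)‖ * ‖P x + (x - P x)‖ = ‖P x‖ * ‖P x‖ + ‖x - P x‖ * ‖x - P x‖ :=
    norm_add_sq_eq_norm_sq_add_norm_sq_of_inner_eq_zero _ _ horth
  have hsum : P x + (x - P x) = x := by abel
  rw [hsum] at hpyth
  -- ‖k‖ = ‖P x‖ and ‖x‖ = ‖k‖
  have hkn : ‖k‖ = ‖P x‖ := by rw [hk, norm_smul, hεn, one_mul]
  have hxk : ‖x‖ = ‖k‖ := hUnorm k
  have hzero : ‖x - P x‖ = 0 := by
    have : ‖x‖ * ‖x‖ = ‖P x‖ * ‖P x‖ := by rw [hxk, hkn]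
    nlinarith [norm_nonneg (x - P x)]
  have hPx : P x = x := by
    have := norm_eq_zero.mp hzero
    have : x - P x = 0 := this
    linear_combination (norm := abel) -this
  have hkx : k = ε • x := by rw [hk, hPx]
  have hUk : U k = ε • k := by
    rw [← hx, hkx, smul_smul, hε2, one_smul]
  refine ⟨hUk, ?_, ?_⟩
  · conv_lhs => rw [hk]
    rw [map_smul, hPP, ← hk]
  · simp [hPx, ← hx]
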